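/- Let n ≥ 1 and k ≥ 1 be integers and let w_0, w_1, …, w_n be positive integers with w_0 = 1. Let I_1, …, I_k be pairwise disjoint nonempty subsets of {1,…,n} such that w_j = 1 for every j ∈ {0,…,n} not lying in I_1 ∪ … ∪ I_k; set d_i = ∑_{j ∈ I_i} w_j for i = 1,…,k and d_0 = (w_0 + … + w_n) − (d_1 + … + d_k). For each i choose an element ν_i ∈ I_i. Consider the multivariate Laurent polynomial over ℚ in the n − k variables indexed by {1,…,n} \ {ν_1,…,ν_k} given by f = T + ∑_j x_j, where the second sum runs over all j ∈ {1,…,n} outside I_1 ∪ … ∪ I_k, and T = [∏_{i=1}^k (1 + ∑_{j ∈ I_i, j ≠ ν_i} x_j)^{d_i}] · ∏_j x_j^{−w_j}, the last product running over all j ∈ {1,…,n} \ {ν_1,…,ν_k}. Then for every natural number m, the constant term (coefficient of the zero exponent vector) of f^{d_0 · m} equals (d_0 m)! · (d_1 m)! ⋯ (d_k m)! / ((w_0 m)! · (w_1 m)! ⋯ (w_n m)!). -/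

import Mathlib

open Finset AddMonoidAlgebra

namespace CTLG

set_option linter.unusedSectionVars false
set_option maxHeartbeats 1000000

variable {σ : Type*} [Fintype σ] [DecidableEq σ]

noncomputable def X (j : σ) : AddMonoidAlgebra ℚ (σ →₀ ℤ) :=
  AddMonoidAlgebra.single (Finsupp.single j (1:ℤ)) (1:ℚ)

noncomputable def vec (c : σ → ℕ) : σ →₀ ℤ :=
  Finsupp.equivFunOnFinite.symm fun j => (c j : ℤ)

lemma vec_apply (c : σ → ℕ) (j : σ) : vec c j = (c j : ℤ) := rfl

lemma vec_inj {c c' : σ → ℕ} (h : vec c = vec c') : c = c' := by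
  funext j
  have := DFunLike.congr_fun h j
  rw [vec_apply, vec_apply] at this
  exact_mod_cast this

lemma prod_X_pow (s : Finset σ) (c : σ → ℕ) (hc : ∀ j, c j ≠ 0 → j ∈ s) :
    ∏ j ∈ s, X j ^ c j = AddMonoidAlgebra.single (vec c) (1:ℚ) := by
  simp only [X, AddMonoidAlgebra.single_pow, one_pow]
  rw [AddMonoidAlgebra.prod_single, Finset.prod_const_one]
  congr 1
  ext j'
  rw [Finsupp.finset_sum_apply]
  simp only [Finsupp.smul_single, smul_eq_mul, mul_one, Finsupp.single_apply, nsmul_eq_mul]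
  rw [Finset.sum_ite_eq' s j' (fun j => (c j : ℤ))]
  rw [vec_apply]
  split_ifs with h
  · rfl
  · have : c j' = 0 := by
      by_contra hne
      exact h (hc j' hne)
    simp [this]

lemma sum_X_pow (s : Finset σ) (e : ℕ) :
    (∑ j ∈ s, X j) ^ e
      = ∑ c ∈ Finset.piAntidiag s e,
          AddMonoidAlgebra.single (vec c) (Nat.multinomial s c : ℚ) := by
  rw [Finset.sum_pow_eq_sum_piAntidiag]
  refine Finset.sum_congr rfl fun c hc => ?_
  rw [Finset.mem_piAntidiag] at hc
  rw [prod_X_pow s c hc.2]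
  rw [AddMonoidAlgebra.natCast_def]
  rw [AddMonoidAlgebra.single_mul_single, zero_add, mul_one]

lemma sum_X_pow_apply_vec (s : Finset σ) (e : ℕ) (b : σ → ℕ) (hb : ∀ j, b j ≠ 0 → j ∈ s) :
    ((∑ j ∈ s, X j) ^ e).coeff (vec b)
      = if ∑ j ∈ s, b j = e then (Nat.multinomial s b : ℚ) else 0 := by
  classical
  rw [sum_X_pow, AddMonoidAlgebra.coeff_sum, Finsupp.finset_sum_apply]
  have hterm : ∀ c : σ → ℕ,
      (AddMonoidAlgebra.single (vec c) ((Nat.multinomial s c : ℚ))).coeff (vec b)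
        = if c = b then (Nat.multinomial s c : ℚ) else 0 := by
    intro c
    rw [AddMonoidAlgebra.coeff_single, Finsupp.single_apply]
    congr 1
    simp only [eq_iff_iff]
    constructor
    · exact fun h => vec_inj h
    · rintro rfl; rfl
  rw [Finset.sum_congr rfl fun c _ => hterm c]
  rw [Finset.sum_ite_eq' (Finset.piAntidiag s e) b (fun c => (Nat.multinomial s c : ℚ))]
  by_cases hsum : ∑ j ∈ s, b j = e
  · rw [if_pos (Finset.mem_piAntidiag.2 ⟨hsum, hb⟩), if_pos hsum]
  · rw [if_neg (fun h => hsum (Finset.mem_piAntidiag.1 h).1), if_neg hsum]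

lemma mul_natCast_apply (g : AddMonoidAlgebra ℚ (σ →₀ ℤ)) (c : ℕ) (u : σ →₀ ℤ) :
    (g * (c : AddMonoidAlgebra ℚ (σ →₀ ℤ))).coeff u = g.coeff u * (c : ℚ) := by
  rw [AddMonoidAlgebra.natCast_def, AddMonoidAlgebra.coeff_mul_single_apply, neg_zero, add_zero]

lemma one_add_sum_X_pow_apply (s : Finset σ) (e : ℕ) (b : σ → ℕ)
    (hb : ∀ j, b j ≠ 0 → j ∈ s) (hbe : ∑ j ∈ s, b j ≤ e) :
    ((1 + ∑ j ∈ s, X j) ^ e).coeff (vec b)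
      = (e.choose (∑ j ∈ s, b j) : ℚ) * (Nat.multinomial s b : ℚ) := by
  classical
  rw [add_pow]
  simp only [one_pow, one_mul]
  rw [AddMonoidAlgebra.coeff_sum, Finsupp.finset_sum_apply]
  have hterm : ∀ r ∈ Finset.range (e+1),
      ((∑ j ∈ s, X j) ^ (e - r) * ((e.choose r : ℕ) : AddMonoidAlgebra ℚ (σ →₀ ℤ))).coeff (vec b)
        = (if ∑ j ∈ s, b j = e - r then (Nat.multinomial s b : ℚ) else 0) * (e.choose r : ℚ) := by
    intro r _
    rw [mul_natCast_apply, sum_X_pow_apply_vec s (e-r) b hb]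
  rw [Finset.sum_congr rfl hterm]
  rw [Finset.sum_eq_single (e - (∑ j ∈ s, b j))]
  · rw [if_pos (by omega), Nat.choose_symm hbe, mul_comm]
  · intro r hr hne
    rw [Finset.mem_range] at hr
    rw [if_neg (by omega), zero_mul]
  · intro h
    exfalso
    exact h (Finset.mem_range.2 (by omega))

/-- `g` only involves exponent vectors supported in `D`. -/
def SuppIn (D : Finset σ) (g : AddMonoidAlgebra ℚ (σ →₀ ℤ)) : Prop :=
  ∀ u ∈ g.coeff.support, ∀ j, j ∉ D → u j = 0

lemma suppIn_single {D : Finset σ} {v : σ →₀ ℤ} {r : ℚ} (hv : ∀ j, j ∉ D → v j = 0) :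
    SuppIn D (AddMonoidAlgebra.single v r) := by
  intro u hu j hj
  rw [AddMonoidAlgebra.coeff_single] at hu
  have := Finsupp.support_single_subset hu
  simp only [Finset.mem_singleton] at this
  subst this; exact hv j hj

lemma suppIn_one {D : Finset σ} : SuppIn D (1 : AddMonoidAlgebra ℚ (σ →₀ ℤ)) :=
  suppIn_single (fun _ _ => rfl)

lemma suppIn_add {D : Finset σ} {g h : AddMonoidAlgebra ℚ (σ →₀ ℤ)}
    (hg : SuppIn D g) (hh : SuppIn D h) : SuppIn D (g + h) := by
  intro u hu j hj
  rw [AddMonoidAlgebra.coeff_add] at hu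
  rcases Finset.mem_union.1 (Finsupp.support_add hu) with h' | h'
  · exact hg u h' j hj
  · exact hh u h' j hj

lemma suppIn_mul {D : Finset σ} {g h : AddMonoidAlgebra ℚ (σ →₀ ℤ)}
    (hg : SuppIn D g) (hh : SuppIn D h) : SuppIn D (g * h) := by
  classical
  intro u hu j hj
  have := AddMonoidAlgebra.support_coeff_mul_subset g h hu
  rw [Finset.mem_add] at this
  obtain ⟨a, ha, b, hb, rfl⟩ := this
  rw [Finsupp.add_apply, hg a ha j hj, hh b hb j hj, add_zero]

lemma suppIn_pow {D : Finset σ} {g : AddMonoidAlgebra ℚ (σ →₀ ℤ)}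
    (hg : SuppIn D g) (e : ℕ) : SuppIn D (g ^ e) := by
  induction e with
  | zero => simpa using suppIn_one
  | succ e ih => rw [pow_succ]; exact suppIn_mul ih hg

lemma suppIn_sum {D : Finset σ} {ι : Type*} {t : Finset ι}
    {g : ι → AddMonoidAlgebra ℚ (σ →₀ ℤ)} (hg : ∀ i ∈ t, SuppIn D (g i)) :
    SuppIn D (∑ i ∈ t, g i) := by
  classical
  induction t using Finset.induction_on with
  | empty => intro u hu; simp at hu
  | @insert _ _ hni ih =>
      rw [Finset.sum_insert hni]
      exact suppIn_add (hg _ (Finset.mem_insert_self _ _))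
        (ih fun i hi => hg i (Finset.mem_insert_of_mem hi))

lemma suppIn_prod {D : Finset σ} {ι : Type*} {t : Finset ι}
    {g : ι → AddMonoidAlgebra ℚ (σ →₀ ℤ)} (hg : ∀ i ∈ t, SuppIn D (g i)) :
    SuppIn D (∏ i ∈ t, g i) := by
  classical
  induction t using Finset.induction_on with
  | empty => simpa using suppIn_one
  | @insert _ _ hni ih =>
      rw [Finset.prod_insert hni]
      exact suppIn_mul (hg _ (Finset.mem_insert_self _ _))
        (ih fun i hi => hg i (Finset.mem_insert_of_mem hi))

lemma suppIn_mono {D D' : Finset σ} (hDD : D ⊆ D') {g : AddMonoidAlgebra ℚ (σ →₀ ℤ)}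
    (hg : SuppIn D g) : SuppIn D' g :=
  fun u hu j hj => hg u hu j (fun h => hj (hDD h))

/-- factorization of a coefficient of a product supported in disjoint variable sets -/
lemma mul_apply_disjoint {D1 D2 : Finset σ} (hD : Disjoint D1 D2)
    {g h : AddMonoidAlgebra ℚ (σ →₀ ℤ)} (hg : SuppIn D1 g) (hh : SuppIn D2 h)
    {u v : σ →₀ ℤ} (hu : ∀ j, j ∉ D1 → u j = 0) (hv : ∀ j, j ∉ D2 → v j = 0) :
    (g * h).coeff (u + v) = g.coeff u * h.coeff v := by
  classical
  rw [AddMonoidAlgebra.coeff_mul]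
  rw [Finsupp.sum]
  have key : ∀ a ∈ g.coeff.support, ∀ b ∈ h.coeff.support, a + b = u + v → a = u ∧ b = v := by
    intro a ha b hb hab
    have hcoord : ∀ j, a j + b j = u j + v j := by
      intro j; have := DFunLike.congr_fun hab j
      simpa using this
    constructor <;> ext j
    · by_cases h1 : j ∈ D1
      · have hb0 : b j = 0 := hh b hb j (Finset.disjoint_left.1 hD h1)
        have hv0 : v j = 0 := hv j (Finset.disjoint_left.1 hD h1)
        have := hcoord j; rw [hb0, hv0, add_zero, add_zero] at this; exact this
      · rw [hg a ha j h1, hu j h1]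
    · by_cases h2 : j ∈ D2
      · have ha0 : a j = 0 := hg a ha j (Finset.disjoint_right.1 hD h2)
        have hu0 : u j = 0 := hu j (Finset.disjoint_right.1 hD h2)
        have := hcoord j; rw [ha0, hu0, zero_add, zero_add] at this; exact this
      · rw [hh b hb j h2, hv j h2]
  have step1 : ∀ a ∈ g.coeff.support,
      (h.coeff.sum fun a₂ b₂ => if a + a₂ = u + v then g.coeff a * b₂ else 0)
        = if a = u then g.coeff u * h.coeff v else 0 := by
    intro a ha
    rw [Finsupp.sum]
    by_cases hau : a = u
    · subst hau
      rw [if_pos rfl]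
      by_cases hvh : v ∈ h.coeff.support
      · rw [Finset.sum_eq_single_of_mem v hvh]
        · rw [if_pos rfl]
        · intro b hb hbv
          rw [if_neg]
          intro hcontr
          exact hbv ((key a ha b hb hcontr).2)
      · rw [Finsupp.notMem_support_iff.1 hvh, mul_zero]
        apply Finset.sum_eq_zero
        intro b hb
        rw [if_neg]
        intro hcontr
        exact hvh (((key a ha b hb hcontr).2) ▸ hb)
    · rw [if_neg hau]
      apply Finset.sum_eq_zero
      intro b hb
      rw [if_neg]
      intro hcontr
      exact hau ((key a ha b hb hcontr).1)
  rw [Finset.sum_congr rfl step1]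
  by_cases hug : u ∈ g.coeff.support
  · rw [Finset.sum_ite_eq' g.coeff.support u (fun _ => g.coeff u * h.coeff v), if_pos hug]
  · rw [Finsupp.notMem_support_iff.1 hug, zero_mul]
    apply Finset.sum_eq_zero
    intro a ha
    rw [if_neg]
    intro hcontr; subst hcontr; exact hug ha

lemma prod_apply_disjoint {ι : Type*} [DecidableEq ι] {t : Finset ι} {D : ι → Finset σ}
    (hD : ∀ i ∈ t, ∀ i' ∈ t, i ≠ i' → Disjoint (D i) (D i'))
    {g : ι → AddMonoidAlgebra ℚ (σ →₀ ℤ)} (hg : ∀ i ∈ t, SuppIn (D i) (g i))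
    {u : ι → σ →₀ ℤ} (hu : ∀ i ∈ t, ∀ j, j ∉ D i → u i j = 0) :
    (∏ i ∈ t, g i).coeff (∑ i ∈ t, u i) = ∏ i ∈ t, (g i).coeff (u i) := by
  classical
  induction t using Finset.induction_on with
  | empty => simp [AddMonoidAlgebra.one_def]
  | @insert a t hni ih =>
      rw [Finset.prod_insert hni, Finset.sum_insert hni, Finset.prod_insert hni]
      have hdisj : Disjoint (D a) (t.sup D) := by
        rw [Finset.disjoint_sup_right]
        intro i hi
        exact hD a (Finset.mem_insert_self _ _) i (Finset.mem_insert_of_mem hi)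
          (fun h => hni (h ▸ hi))
      rw [mul_apply_disjoint hdisj (hg a (Finset.mem_insert_self _ _))
        (suppIn_prod fun i hi => suppIn_mono (Finset.le_sup hi)
          (hg i (Finset.mem_insert_of_mem hi)))
        (hu a (Finset.mem_insert_self _ _))
        (fun j hj => by
          rw [Finsupp.finset_sum_apply]
          apply Finset.sum_eq_zero
          intro i hi
          exact hu i (Finset.mem_insert_of_mem hi) j
            (fun h => hj (Finset.mem_sup.2 ⟨i, hi, h⟩)))]
      rw [ih (fun i hi i' hi' hne => hD i (Finset.mem_insert_of_mem hi) i'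
            (Finset.mem_insert_of_mem hi') hne)
          (fun i hi => hg i (Finset.mem_insert_of_mem hi))
          (fun i hi => hu i (Finset.mem_insert_of_mem hi))]

@[to_additive]
lemma partition_prod {n k : ℕ} {M₀ : Type*} [CommMonoid M₀]
    (I : Fin k → Finset (Fin (n+1))) (h0I : ∀ i, (0 : Fin (n+1)) ∉ I i)
    (hdisj : ∀ i i', i ≠ i' → Disjoint (I i) (I i')) (g : Fin (n+1) → M₀) :
    ∏ j, g j
      = (g 0 * ∏ j ∈ Finset.univ.filter (fun j => j ≠ 0 ∧ ∀ i, j ∉ I i), g j)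
        * ∏ i, ∏ j ∈ I i, g j := by
  classical
  rw [← Finset.prod_filter_mul_prod_filter_not Finset.univ (fun j => ∀ i, j ∉ I i) g]
  congr 1
  · have : Finset.univ.filter (fun j : Fin (n+1) => ∀ i, j ∉ I i)
        = insert 0 (Finset.univ.filter (fun j => j ≠ 0 ∧ ∀ i, j ∉ I i)) := by
      ext j
      simp only [Finset.mem_filter, Finset.mem_univ, true_and, Finset.mem_insert]
      constructor
      · intro h
        by_cases hj : j = 0
        · exact Or.inl hj
        · exact Or.inr ⟨hj, h⟩
      · rintro (rfl | ⟨_, h⟩)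
        · exact h0I
        · exact h
    rw [this, Finset.prod_insert (by simp)]
  · have : Finset.univ.filter (fun j : Fin (n+1) => ¬ ∀ i, j ∉ I i)
        = Finset.univ.biUnion I := by
      ext j
      simp only [Finset.mem_filter, Finset.mem_univ, true_and, Finset.mem_biUnion,
        not_forall, not_not]
    rw [this, Finset.prod_biUnion]
    intro i _ i' _ hne
    exact hdisj i i' hne


theorem main_aux {σ : Type*} [Fintype σ] [DecidableEq σ]
    {k : ℕ} (B : Fin k → Finset σ) (Fs : Finset σ)
    (hBdisj : ∀ i i', i ≠ i' → Disjoint (B i) (B i'))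
    (hBF : ∀ i, Disjoint (B i) Fs)
    (hcover : ∀ j : σ, j ∈ Fs ∨ ∃ i, j ∈ B i)
    (wv : σ → ℕ) (hwF : ∀ j ∈ Fs, wv j = 1)
    (wν : Fin k → ℕ) (hwν : ∀ i, 1 ≤ wν i)
    (D : Fin k → ℕ) (hD : ∀ i, D i = wν i + ∑ j ∈ B i, wv j)
    (d0 : ℕ) (hd0 : d0 = Fs.card + 1) (m : ℕ) :
    (((∏ i, (1 + ∑ j ∈ B i, X j) ^ D i) *
        AddMonoidAlgebra.single (-(vec wv)) (1:ℚ) + ∑ j ∈ Fs, X j) ^ (d0 * m)).coeff 0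
      = (((d0*m).factorial : ℚ) * ∏ i, ((D i * m).factorial : ℚ)) /
          ((m.factorial : ℚ) ^ d0 *
            ∏ i, (((wν i * m).factorial : ℚ) * ∏ j ∈ B i, ((wv j * m).factorial : ℚ))) := by
  classical
  set N := d0 * m with hN
  set T : AddMonoidAlgebra ℚ (σ →₀ ℤ) := ∏ i, (1 + ∑ j ∈ B i, X j) ^ D i with hT
  set SF : AddMonoidAlgebra ℚ (σ →₀ ℤ) := ∑ j ∈ Fs, X j with hSF
  set DU : Finset σ := Finset.univ.filter (fun j => ∃ i, j ∈ B i) with hDU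
  set cm : σ → ℕ := fun j => if j ∈ Fs then m else 0 with hcm
  set bU : Fin k → σ → ℕ := fun i j => if j ∈ B i then wv j * m else 0 with hbU
  have hcmFs : ∀ j ∈ Fs, cm j = m := by intro j hj; simp only [hcm, if_pos hj]
  have hcmNot : ∀ j, j ∉ Fs → cm j = 0 := by intro j hj; simp only [hcm, if_neg hj]
  have hbUB : ∀ i, ∀ j ∈ B i, bU i j = wv j * m := by
    intro i j hj; simp only [hbU, if_pos hj]
  have hbUNot : ∀ i j, j ∉ B i → bU i j = 0 := by
    intro i j hj; simp only [hbU, if_neg hj]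
  have hmN : m ≤ N := by
    rw [hN, hd0]; nlinarith [Nat.zero_le (Fs.card * m)]
  have hNcard : N = m + Fs.card * m := by rw [hN, hd0]; ring
  -- support of powers of T
  have hPsupp : ∀ i (e : ℕ), SuppIn (B i) ((1 + ∑ j ∈ B i, X j) ^ e) := by
    intro i e
    apply suppIn_pow
    apply suppIn_add suppIn_one
    apply suppIn_sum
    intro j hj
    apply suppIn_single
    intro j' hj'
    rw [Finsupp.single_apply, if_neg]
    rintro rfl; exact hj' hj
  have hBsubDU : ∀ i, B i ⊆ DU := by
    intro i j hj
    rw [hDU, Finset.mem_filter]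
    exact ⟨Finset.mem_univ j, ⟨i, hj⟩⟩
  have hTsupp : ∀ a : ℕ, SuppIn DU (T ^ a) := by
    intro a
    apply suppIn_pow
    apply suppIn_prod
    intro i _
    exact suppIn_mono (hBsubDU i) (hPsupp i (D i))
  have hFsDU : ∀ j ∈ Fs, j ∉ DU := by
    intro j hj hjDU
    rw [hDU, Finset.mem_filter] at hjDU
    obtain ⟨-, i, hi⟩ := hjDU
    exact (Finset.disjoint_left.1 (hBF i) hi) hj
  -- Step 1
  have step1 : ((T * AddMonoidAlgebra.single (-(vec wv)) (1:ℚ) + SF) ^ N).coeff 0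
      = ∑ a ∈ Finset.range (N+1),
          (T ^ a * SF ^ (N - a)).coeff (a • vec wv) * (N.choose a : ℚ) := by
    rw [add_pow, AddMonoidAlgebra.coeff_sum, Finsupp.finset_sum_apply]
    refine Finset.sum_congr rfl fun a _ => ?_
    have h1 : (T * AddMonoidAlgebra.single (-(vec wv)) (1:ℚ)) ^ a * SF ^ (N - a)
          * ((N.choose a : ℕ) : AddMonoidAlgebra ℚ (σ →₀ ℤ))
        = (T ^ a * SF ^ (N - a) * ((N.choose a : ℕ) : AddMonoidAlgebra ℚ (σ →₀ ℤ)))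
            * AddMonoidAlgebra.single (a • (-(vec wv))) (1:ℚ) := by
      rw [mul_pow, AddMonoidAlgebra.single_pow, one_pow]
      ring
    rw [h1, AddMonoidAlgebra.coeff_mul_single_apply, mul_one, mul_natCast_apply]
    congr 2
    rw [smul_neg, zero_add, neg_neg]
  -- Step 2
  have step2 : ∀ a : ℕ, (T ^ a * SF ^ (N - a)).coeff (a • vec wv)
      = ∑ c ∈ Finset.piAntidiag Fs (N - a),
          (T ^ a).coeff (a • vec wv - vec c) * (Nat.multinomial Fs c : ℚ) := by
    intro a
    rw [hSF, sum_X_pow, Finset.mul_sum, AddMonoidAlgebra.coeff_sum, Finsupp.finset_sum_apply]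
    exact Finset.sum_congr rfl fun c _ => by rw [AddMonoidAlgebra.coeff_mul_single_apply, sub_eq_add_neg]
  -- Step 3 : vanishing
  have hvanish : ∀ a ∈ Finset.range (N+1), ∀ c ∈ Finset.piAntidiag Fs (N - a),
      (a ≠ m ∨ c ≠ cm) → (T ^ a).coeff (a • vec wv - vec c) = 0 := by
    intro a ha c hc hne
    by_contra h0
    have hmem : (a • vec wv - vec c) ∈ (T ^ a).coeff.support := Finsupp.mem_support_iff.2 h0
    have hFzero : ∀ j ∈ Fs, c j = a := by
      intro j hj
      have hz := hTsupp a _ hmem j (hFsDU j hj)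
      rw [Finsupp.sub_apply, Finsupp.smul_apply, vec_apply, vec_apply, hwF j hj] at hz
      have : (a : ℤ) - (c j : ℤ) = 0 := by
        simpa using hz
      exact_mod_cast (sub_eq_zero.1 this).symm
    obtain ⟨hsum, hsupp⟩ := Finset.mem_piAntidiag.1 hc
    have hsum2 : Fs.card * a = N - a := by
      rw [← hsum, Finset.sum_congr rfl hFzero, Finset.sum_const, smul_eq_mul]
    have haN : a ≤ N := by
      rw [Finset.mem_range] at ha; omega
    have ham : a = m := by
      have h1 : d0 * a = d0 * m := by
        rw [hd0]
        calc (Fs.card + 1) * a = Fs.card * a + a := by ring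
          _ = N - a + a := by rw [hsum2]
          _ = N := by omega
          _ = (Fs.card + 1) * m := by rw [hN, hd0]
      exact Nat.eq_of_mul_eq_mul_left (by omega) h1
    have hcmeq : c = cm := by
      funext j
      by_cases hj : j ∈ Fs
      · rw [hcmFs j hj, hFzero j hj, ham]
      · rw [hcmNot j hj]
        by_contra hne'
        exact hj (hsupp j hne')
    exact hne.elim (fun h => h ham) (fun h => h hcmeq)
  have hcmmem : cm ∈ Finset.piAntidiag Fs (N - m) := by
    rw [Finset.mem_piAntidiag]
    constructor
    · rw [Finset.sum_congr rfl hcmFs, Finset.sum_const, smul_eq_mul]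
      omega
    · intro j hj
      by_contra hjF
      exact hj (hcmNot j hjF)
  -- Step 4 : collapse
  have step4 : ((T * AddMonoidAlgebra.single (-(vec wv)) (1:ℚ) + SF) ^ N).coeff 0
      = (T ^ m).coeff (m • vec wv - vec cm) * (Nat.multinomial Fs cm : ℚ) * (N.choose m : ℚ) := by
    rw [step1, Finset.sum_eq_single m]
    · rw [step2 m, Finset.sum_eq_single cm]
      · intro c hc hcm'
        rw [hvanish m (Finset.mem_range.2 (by omega)) c hc (Or.inr hcm'), zero_mul]
      · intro h; exact absurd hcmmem h
    · intro a ha hne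
      rw [step2 a, Finset.sum_eq_zero, zero_mul]
      intro c hc
      rw [hvanish a ha c hc (Or.inl hne), zero_mul]
    · intro h; exact absurd (Finset.mem_range.2 (by omega)) h
  -- Step 5 : factor T^m over the blocks
  have hustar : m • vec wv - vec cm = ∑ i, vec (bU i) := by
    ext j
    rw [Finsupp.sub_apply, Finsupp.smul_apply, vec_apply, vec_apply, Finsupp.finset_sum_apply]
    by_cases hj : j ∈ Fs
    · rw [Finset.sum_eq_zero]
      · rw [hwF j hj, hcmFs j hj]; simp
      · intro i _
        rw [vec_apply, hbUNot i j (Finset.disjoint_right.1 (hBF i) hj), Nat.cast_zero]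
    · obtain ⟨i0, hi0⟩ := (hcover j).resolve_left hj
      rw [Finset.sum_eq_single i0]
      · rw [vec_apply, hbUB i0 j hi0, hcmNot j hj]
        push_cast
        ring
      · intro i _ hne
        rw [vec_apply,
          hbUNot i j (fun h => (Finset.disjoint_left.1 (hBdisj i i0 hne) h) hi0), Nat.cast_zero]
      · intro h; exact absurd (Finset.mem_univ i0) h
  have hTm : T ^ m = ∏ i, (1 + ∑ j ∈ B i, X j) ^ (D i * m) := by
    rw [hT, ← Finset.prod_pow]
    exact Finset.prod_congr rfl fun i _ => (pow_mul _ _ _).symm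
  have hfact : (T ^ m).coeff (m • vec wv - vec cm)
      = ∏ i, ((1 + ∑ j ∈ B i, X j) ^ (D i * m)).coeff (vec (bU i)) := by
    rw [hustar, hTm]
    refine prod_apply_disjoint (fun i _ i' _ hne => hBdisj i i' hne)
      (fun i _ => hPsupp i (D i * m)) (fun i _ j hj => ?_)
    rw [vec_apply, hbUNot i j hj, Nat.cast_zero]
  -- Step 6 : evaluate each factor
  have hsble : ∀ i, ∑ j ∈ B i, bU i j = (∑ j ∈ B i, wv j) * m := by
    intro i
    rw [Finset.sum_congr rfl (hbUB i), Finset.sum_mul]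
  have htile : ∀ i, (∑ j ∈ B i, wv j) * m ≤ D i * m :=
    fun i => Nat.mul_le_mul_right m (by rw [hD i]; omega)
  have heval : ∀ i, ((1 + ∑ j ∈ B i, X j) ^ (D i * m)).coeff (vec (bU i))
      = (((D i * m).choose ((∑ j ∈ B i, wv j) * m) : ℕ) : ℚ)
          * (Nat.multinomial (B i) (bU i) : ℚ) := by
    intro i
    have hb : ∀ j, bU i j ≠ 0 → j ∈ B i := by
      intro j hj
      by_contra hjB
      exact hj (hbUNot i j hjB)
    have := one_add_sum_X_pow_apply (B i) (D i * m) (bU i) hb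
      (by rw [hsble i]; exact htile i)
    rw [this, hsble i]
  -- assemble the value
  have hvalue : ((T * AddMonoidAlgebra.single (-(vec wv)) (1:ℚ) + SF) ^ N).coeff 0
      = (∏ i, ((((D i * m).choose ((∑ j ∈ B i, wv j) * m) : ℕ) : ℚ)
            * (Nat.multinomial (B i) (bU i) : ℚ)))
          * (Nat.multinomial Fs cm : ℚ) * (N.choose m : ℚ) := by
    rw [step4, hfact, Finset.prod_congr rfl (fun i _ => heval i)]
  -- Step 7 : arithmetic
  have eF : Nat.multinomial Fs cm * m.factorial ^ Fs.card = (Fs.card * m).factorial := by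
    have h1 : ∏ j ∈ Fs, (cm j).factorial = m.factorial ^ Fs.card := by
      rw [Finset.prod_congr rfl (fun j hj => by rw [hcmFs j hj]), Finset.prod_const]
    have h2 : ∑ j ∈ Fs, cm j = Fs.card * m := by
      rw [Finset.sum_congr rfl hcmFs, Finset.sum_const, smul_eq_mul]
    have := Nat.multinomial_spec Fs cm
    rw [h1, h2] at this
    rw [mul_comm] at this
    exact this
  have eN : N.choose m * (m.factorial * (Fs.card * m).factorial) = N.factorial := by
    have := Nat.choose_mul_factorial_mul_factorial hmN
    have hNm' : N - m = Fs.card * m := by omega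
    rw [hNm'] at this
    rw [← this]; ring
  have ei : ∀ i, (((D i * m).choose ((∑ j ∈ B i, wv j) * m)) * Nat.multinomial (B i) (bU i))
      * ((wν i * m).factorial * ∏ j ∈ B i, (wv j * m).factorial) = (D i * m).factorial := by
    intro i
    have h1 : Nat.multinomial (B i) (bU i) * ∏ j ∈ B i, (wv j * m).factorial
        = ((∑ j ∈ B i, wv j) * m).factorial := by
      have hp : ∏ j ∈ B i, (bU i j).factorial = ∏ j ∈ B i, (wv j * m).factorial := by
        refine Finset.prod_congr rfl fun j hj => by rw [hbUB i j hj]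
      have := Nat.multinomial_spec (B i) (bU i)
      rw [hp, hsble i] at this
      rw [mul_comm] at this
      exact this
    have hsub : D i * m - (∑ j ∈ B i, wv j) * m = wν i * m := by
      rw [hD i, Nat.add_mul, Nat.add_sub_cancel]
    have hc := Nat.choose_mul_factorial_mul_factorial (htile i)
    rw [hsub] at hc
    calc ((D i * m).choose ((∑ j ∈ B i, wv j) * m) * Nat.multinomial (B i) (bU i))
        * ((wν i * m).factorial * ∏ j ∈ B i, (wv j * m).factorial)
        = ((D i * m).choose ((∑ j ∈ B i, wv j) * m)
            * (Nat.multinomial (B i) (bU i) * ∏ j ∈ B i, (wv j * m).factorial))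
            * (wν i * m).factorial := by ring
      _ = (D i * m).choose ((∑ j ∈ B i, wv j) * m) * ((∑ j ∈ B i, wv j) * m).factorial
            * (wν i * m).factorial := by rw [h1]
      _ = (D i * m).factorial := hc
  have hnat : (N.choose m * Nat.multinomial Fs cm
        * ∏ i, ((D i * m).choose ((∑ j ∈ B i, wv j) * m) * Nat.multinomial (B i) (bU i)))
      * (m.factorial ^ d0
        * ∏ i, ((wν i * m).factorial * ∏ j ∈ B i, (wv j * m).factorial))
      = N.factorial * ∏ i, (D i * m).factorial := by
    calc (N.choose m * Nat.multinomial Fs cm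
        * ∏ i, ((D i * m).choose ((∑ j ∈ B i, wv j) * m) * Nat.multinomial (B i) (bU i)))
      * (m.factorial ^ d0
        * ∏ i, ((wν i * m).factorial * ∏ j ∈ B i, (wv j * m).factorial))
        = (N.choose m * (m.factorial * (Nat.multinomial Fs cm * m.factorial ^ Fs.card)))
          * ((∏ i, ((D i * m).choose ((∑ j ∈ B i, wv j) * m) * Nat.multinomial (B i) (bU i)))
            * ∏ i, ((wν i * m).factorial * ∏ j ∈ B i, (wv j * m).factorial)) := by
          rw [hd0]; ring
      _ = (N.choose m * (m.factorial * (Fs.card * m).factorial))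
          * ∏ i, (((D i * m).choose ((∑ j ∈ B i, wv j) * m) * Nat.multinomial (B i) (bU i))
            * ((wν i * m).factorial * ∏ j ∈ B i, (wv j * m).factorial)) := by
          rw [eF, ← Finset.prod_mul_distrib]
      _ = N.factorial * ∏ i, (D i * m).factorial := by
          rw [eN, Finset.prod_congr rfl (fun i _ => ei i)]
  -- denominator nonzero
  have hden : ((m.factorial : ℚ) ^ d0
      * ∏ i, (((wν i * m).factorial : ℚ) * ∏ j ∈ B i, ((wv j * m).factorial : ℚ))) ≠ 0 := by
    apply mul_ne_zero
    · exact pow_ne_zero _ (Nat.cast_ne_zero.2 (Nat.factorial_ne_zero m))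
    · apply Finset.prod_ne_zero_iff.2
      intro i _
      apply mul_ne_zero
      · exact Nat.cast_ne_zero.2 (Nat.factorial_ne_zero _)
      · apply Finset.prod_ne_zero_iff.2
        intro j _
        exact Nat.cast_ne_zero.2 (Nat.factorial_ne_zero _)
  rw [hvalue, eq_div_iff hden]
  have hcast := congrArg (Nat.cast : ℕ → ℚ) hnat
  push_cast at hcast ⊢
  linear_combination hcast


end CTLG

open CTLG

/-- Let `w_0 = 1, w_1, …, w_n` be positive integers, `I_1, …, I_k` pairwise
disjoint nonempty subsets of `{1,…,n}` such that `w_j = 1` for every index `j` outside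
`I_1 ∪ … ∪ I_k`, let `d_i = ∑_{j ∈ I_i} w_j` and `d_0 = ∑ w_j − ∑ d_i`, and pick
`ν_i ∈ I_i`. The Laurent polynomial in the variables indexed by `{1,…,n} \ {ν_1,…,ν_k}`
`f = [∏_i (1 + ∑_{j ∈ I_i, j ≠ ν_i} x_j)^{d_i}] · ∏_j x_j^{-w_j} + ∑_{j ∉ ∪ I_i} x_j`
satisfies: the constant term of `f ^ (d_0 m)` equals
`(d_0 m)! (d_1 m)! ⋯ (d_k m)! / ((w_0 m)! (w_1 m)! ⋯ (w_n m)!)` for all `m`. -/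
theorem constant_terms_of_complete_intersection_LG_model
    (n k : ℕ) (hn : 1 ≤ n) (hk : 1 ≤ k)
    (w : Fin (n + 1) → ℕ) (hwpos : ∀ j, 0 < w j) (hw0 : w 0 = 1)
    (I : Fin k → Finset (Fin (n + 1)))
    (hne : ∀ i, (I i).Nonempty)
    (h0I : ∀ i, (0 : Fin (n + 1)) ∉ I i)
    (hdisj : ∀ i i', i ≠ i' → Disjoint (I i) (I i'))
    (hout : ∀ j, (∀ i, j ∉ I i) → w j = 1)
    (d : Fin k → ℕ) (hd : ∀ i, d i = ∑ j ∈ I i, w j)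
    (d0 : ℕ) (hd0 : d0 = ∑ j, w j - ∑ i, d i)
    (ν : Fin k → Fin (n + 1)) (hν : ∀ i, ν i ∈ I i)
    -- the index set of the variables: `{1,…,n} \ {ν_1,…,ν_k}`
    (S : Finset (Fin (n + 1)))
    (hS : S = Finset.univ.filter fun j : Fin (n + 1) => j ≠ 0 ∧ ∀ i, j ≠ ν i)
    (f : AddMonoidAlgebra ℚ ({j : Fin (n + 1) // j ∈ S} →₀ ℤ))
    (hf : f =
      (∏ i : Fin k,
          ((1 : AddMonoidAlgebra ℚ ({j : Fin (n + 1) // j ∈ S} →₀ ℤ)) +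
            ∑ j ∈ Finset.univ.filter
                (fun j : {j : Fin (n + 1) // j ∈ S} => (j : Fin (n + 1)) ∈ I i ∧
                  (j : Fin (n + 1)) ≠ ν i),
              AddMonoidAlgebra.single (Finsupp.single j 1) (1 : ℚ)) ^ d i)
        * AddMonoidAlgebra.single
            (Finsupp.equivFunOnFinite.symm
              fun j : {j : Fin (n + 1) // j ∈ S} => -(w (j : Fin (n + 1)) : ℤ))
            (1 : ℚ)
      + ∑ j ∈ Finset.univ.filter
            (fun j : {j : Fin (n + 1) // j ∈ S} => ∀ i, (j : Fin (n + 1)) ∉ I i),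
          AddMonoidAlgebra.single (Finsupp.single j 1) (1 : ℚ)) :
    ∀ m : ℕ,
      (f ^ (d0 * m)).coeff 0 =
        (((d0 * m).factorial : ℚ) * ∏ i : Fin k, ((d i * m).factorial : ℚ)) /
          ∏ j : Fin (n + 1), ((w j * m).factorial : ℚ) := by
  intro m
  classical
  have hmemS : ∀ j : Fin (n + 1), j ∈ S ↔ (j ≠ 0 ∧ ∀ i, j ≠ ν i) := by
    intro j; rw [hS]; simp
  set Bi : Fin k → Finset {j : Fin (n + 1) // j ∈ S} :=
    fun i => Finset.univ.filter fun j => (j : Fin (n + 1)) ∈ I i with hBi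
  set Fs : Finset {j : Fin (n + 1) // j ∈ S} :=
    Finset.univ.filter fun j => ∀ i, (j : Fin (n + 1)) ∉ I i with hFsdef
  have hBi_mem : ∀ i (j : {j : Fin (n + 1) // j ∈ S}),
      j ∈ Bi i ↔ (j : Fin (n + 1)) ∈ I i := by
    intro i j; rw [hBi]; simp
  have hFs_mem : ∀ (j : {j : Fin (n + 1) // j ∈ S}),
      j ∈ Fs ↔ ∀ i, (j : Fin (n + 1)) ∉ I i := by
    intro j; rw [hFsdef]; simp
  -- image descriptions
  have himB : ∀ i, (Bi i).image Subtype.val = (I i).erase (ν i) := by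
    intro i
    ext x
    simp only [Finset.mem_image, Finset.mem_erase]
    constructor
    · rintro ⟨j, hj, rfl⟩
      exact ⟨((hmemS _).1 j.2).2 i, (hBi_mem i j).1 hj⟩
    · rintro ⟨hxν, hxI⟩
      have hxS : x ∈ S := by
        refine (hmemS x).2 ⟨?_, ?_⟩
        · rintro rfl; exact h0I i hxI
        · intro i' hxν'
          by_cases hii : i' = i
          · exact hxν (hii ▸ hxν')
          · exact (Finset.disjoint_left.1 (hdisj i' i hii) (hxν' ▸ hν i')) hxI
      exact ⟨⟨x, hxS⟩, (hBi_mem i ⟨x, hxS⟩).2 hxI, rfl⟩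
  have himF : Fs.image Subtype.val
      = Finset.univ.filter (fun j : Fin (n+1) => j ≠ 0 ∧ ∀ i, j ∉ I i) := by
    ext x
    simp only [Finset.mem_image, Finset.mem_filter, Finset.mem_univ, true_and]
    constructor
    · rintro ⟨j, hj, rfl⟩
      exact ⟨((hmemS _).1 j.2).1, (hFs_mem j).1 hj⟩
    · rintro ⟨hx0, hxI⟩
      have hxS : x ∈ S := by
        refine (hmemS x).2 ⟨hx0, fun i hxν => hxI i (hxν ▸ hν i)⟩
      exact ⟨⟨x, hxS⟩, (hFs_mem ⟨x, hxS⟩).2 hxI, rfl⟩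
  -- sum and product decompositions over `I i`
  have hIsum : ∀ i, ∑ j ∈ I i, w j = w (ν i) + ∑ j ∈ Bi i, w (j : Fin (n+1)) := by
    intro i
    rw [← Finset.insert_erase (hν i), Finset.sum_insert (Finset.notMem_erase _ _), ← himB i,
      Finset.sum_image (fun a _ b _ h => Subtype.val_injective h)]
  have hIprodQ : ∀ i, ∏ j ∈ I i, ((w j * m).factorial : ℚ)
      = ((w (ν i) * m).factorial : ℚ)
        * ∏ j ∈ Bi i, ((w (j : Fin (n+1)) * m).factorial : ℚ) := by
    intro i
    rw [← Finset.insert_erase (hν i), Finset.prod_insert (Finset.notMem_erase _ _), ← himB i,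
      Finset.prod_image (fun a _ b _ h => Subtype.val_injective h)]
  -- the cardinality identity
  have hcard : Fs.card
      = (Finset.univ.filter (fun j : Fin (n+1) => j ≠ 0 ∧ ∀ i, j ∉ I i)).card := by
    rw [← himF, Finset.card_image_of_injective _ Subtype.val_injective]
  have hsumw : ∑ j, w j
      = 1 + (Finset.univ.filter (fun j : Fin (n+1) => j ≠ 0 ∧ ∀ i, j ∉ I i)).card
        + ∑ i, d i := by
    rw [CTLG.partition_sum I h0I hdisj w, hw0]
    congr 1
    · congr 1
      rw [Finset.sum_congr rfl (fun j hj => hout j (Finset.mem_filter.1 hj).2.2),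
        Finset.sum_const, smul_eq_mul, mul_one]
    · exact Finset.sum_congr rfl fun i _ => (hd i).symm
  have hd0card : d0 = Fs.card + 1 := by
    rw [hcard]; omega
  -- rewrite f into the canonical form
  have hfilter : ∀ i, (Finset.univ.filter
      (fun j : {j : Fin (n + 1) // j ∈ S} => (j : Fin (n + 1)) ∈ I i ∧
        (j : Fin (n + 1)) ≠ ν i)) = Bi i := by
    intro i
    ext j
    simp only [Finset.mem_filter, Finset.mem_univ, true_and, hBi_mem]
    exact ⟨fun h => h.1, fun h => ⟨h, ((hmemS _).1 j.2).2 i⟩⟩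
  have hsingle : (Finsupp.equivFunOnFinite.symm
        (fun j : {j : Fin (n + 1) // j ∈ S} => -(w (j : Fin (n+1)) : ℤ)))
      = -(vec (fun j : {j : Fin (n + 1) // j ∈ S} => w (j : Fin (n+1)))) := by
    ext j
    simp [vec]
  have hfeq : f = (∏ i, (1 + ∑ j ∈ Bi i, X j) ^ d i)
      * AddMonoidAlgebra.single
          (-(vec (fun j : {j : Fin (n + 1) // j ∈ S} => w (j : Fin (n+1))))) (1:ℚ)
      + ∑ j ∈ Fs, X j := by
    rw [hf, hsingle]
    congr 2
    refine Finset.prod_congr rfl fun i _ => ?_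
    rw [hfilter i]
    rfl
  rw [hfeq, main_aux Bi Fs
    (fun i i' hii => Finset.disjoint_left.2 fun j hj hj' =>
      Finset.disjoint_left.1 (hdisj i i' hii) ((hBi_mem i j).1 hj) ((hBi_mem i' j).1 hj'))
    (fun i => Finset.disjoint_left.2 fun j hj hj' =>
      ((hFs_mem j).1 hj') i ((hBi_mem i j).1 hj))
    (fun j => by
      by_cases hj : j ∈ Fs
      · exact Or.inl hj
      · right
        rw [hFs_mem] at hj
        push_neg at hj
        obtain ⟨i, hi⟩ := hj
        exact ⟨i, (hBi_mem i j).2 hi⟩)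
    (fun j : {j : Fin (n + 1) // j ∈ S} => w (j : Fin (n+1)))
    (fun j hj => hout _ ((hFs_mem j).1 hj))
    (fun i => w (ν i)) (fun i => hwpos (ν i))
    d (fun i => by rw [hd i, hIsum i])
    d0 hd0card m]
  congr 1
  rw [CTLG.partition_prod I h0I hdisj (fun j => ((w j * m).factorial : ℚ))]
  have h1 : ∏ j ∈ Finset.univ.filter (fun j : Fin (n+1) => j ≠ 0 ∧ ∀ i, j ∉ I i),
      ((w j * m).factorial : ℚ) = (m.factorial : ℚ) ^ Fs.card := by
    rw [Finset.prod_congr rfl (fun j hj => by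
        rw [hout j (Finset.mem_filter.1 hj).2.2, one_mul]),
      Finset.prod_const, hcard]
  rw [h1, hw0, one_mul, hd0card, pow_succ]
  rw [Finset.prod_congr rfl fun i (_ : i ∈ Finset.univ) => hIprodQ i]
  ring
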